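/- arXiv:2512.19233 — 3 statements merged into one kernel-verified Lean document; each statement's English description precedes it below -/
import Mathlib

section
/- For every integer n ≥ 4, the maximum over all 3-element subsets {u, v, w} of vertices of CW_n of the number of common neighbors |CN_{CW_n}(u, v, w)| equals 3; that is, any three distinct vertices of CW_n have at most 3 common neighbors, and some three distinct vertices of CW_n have exactly 3 common neighbors. -/
/-- The generating set S₂ = {(1 j) : 2 ≤ j ≤ n} ∪ {(j j+1) : 2 ≤ j ≤ n−1} ∪ {(2 n)},
where elements of {1,…,n} are encoded zero-indexed as `Fin n` (value k represents k+1). -/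
def cwGen (n : ℕ) : Set (Equiv.Perm (Fin n)) :=
  {s | ∃ i j : Fin n, s = Equiv.swap i j ∧
      (((i : ℕ) = 0 ∧ j ≠ i) ∨
       ((j : ℕ) = (i : ℕ) + 1 ∧ 1 ≤ (i : ℕ)) ∨
       ((i : ℕ) = 1 ∧ (j : ℕ) = n - 1))}

/-- The Cayley graph CW_n = Cay(S_n, S₂). -/
def CW (n : ℕ) : SimpleGraph (Equiv.Perm (Fin n)) where
  Adj g h := g ≠ h ∧ g⁻¹ * h ∈ cwGen n
  symm := ⟨by
    rintro g h ⟨hne, i, j, hs, hc⟩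
    refine ⟨hne.symm, i, j, ?_, hc⟩
    have hinv : h⁻¹ * g = (g⁻¹ * h)⁻¹ := by group
    rw [hinv, hs, Equiv.swap_inv]⟩
  loopless := ⟨fun g h => h.1 rfl⟩

section Aux


open Equiv

lemma swap_of_isSwap' {α : Type*} [DecidableEq α] {t : Equiv.Perm α} {x y : α}
    (ht : t.IsSwap) (hxy : x ≠ y) (h : t x = y) : t = Equiv.swap x y := by
  obtain ⟨m, n, hmn, rfl⟩ := ht
  rcases eq_or_ne x m with rfl | hxm
  · rw [swap_apply_left] at h; subst h; rfl
  · rcases eq_or_ne x n with rfl | hxn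
    · rw [swap_apply_right] at h; subst h; exact swap_comm _ _
    · rw [swap_apply_of_ne_of_ne hxm hxn] at h; exact absurd h hxy

lemma mem_Q_form' {α : Type*} [DecidableEq α] {π s : Equiv.Perm α} (hπ : π ≠ 1)
    (hs : s.IsSwap) (hts : (s * π).IsSwap) :
    ∃ a, π a ≠ a ∧ s = Equiv.swap a (π a) := by
  obtain ⟨x, y, hxy, rfl⟩ := hs
  by_cases h1 : π x = y
  · exact ⟨x, by rw [h1]; exact fun h => hxy h.symm, by rw [h1]⟩
  by_cases h2 : π y = x
  · exact ⟨y, by rw [h2]; exact fun h => hxy h, by rw [h2, swap_comm]⟩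
  exfalso
  have htx : (Equiv.swap x y * π) x = Equiv.swap x y (π x) := rfl
  rcases eq_or_ne (π x) x with hfix | hmove
  · have : (Equiv.swap x y * π) x = y := by rw [htx, hfix, swap_apply_left]
    have ht := swap_of_isSwap' hts hxy this
    apply hπ
    calc π = Equiv.swap x y * (Equiv.swap x y * π) := by rw [swap_mul_self_mul]
    _ = Equiv.swap x y * Equiv.swap x y := by rw [ht]
    _ = 1 := swap_mul_self x y
  · have hpxy : π x ≠ y := h1
    have : (Equiv.swap x y * π) x = π x := by
      rw [htx, swap_apply_of_ne_of_ne hmove hpxy]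
    have ht := swap_of_isSwap' hts (Ne.symm hmove) this
    have hty : (Equiv.swap x y * π) y = y := by
      rw [ht]; exact swap_apply_of_ne_of_ne (Ne.symm hxy) (fun h => hpxy h.symm)
    have : Equiv.swap x y (π y) = y := hty
    have : π y = x := by
      rcases eq_or_ne (π y) x with h | h; · exact h
      rcases eq_or_ne (π y) y with h' | h'
      · rw [h', swap_apply_right] at this; exact absurd this hxy
      · rw [swap_apply_of_ne_of_ne h h'] at this; exact absurd this h'
    exact h2 this

lemma card3' {α : Type*} {s : Set α} {x y z : α} (h : s ⊆ {x, y, z}) : s.ncard ≤ 3 := by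
  calc s.ncard ≤ ({x, y, z} : Set α).ncard :=
        Set.ncard_le_ncard h ((Set.finite_singleton z).insert y |>.insert x)
    _ ≤ 3 := by
        refine le_trans (Set.ncard_insert_le _ _) ?_
        have := Set.ncard_insert_le y ({z} : Set α)
        have := Set.ncard_singleton z
        omega

lemma Q_card' {α : Type*} [DecidableEq α] {π : Equiv.Perm α} (hπ : π ≠ 1) :
    {s : Equiv.Perm α | s.IsSwap ∧ (s * π).IsSwap}.ncard ≤ 3 := by
  set Q := {s : Equiv.Perm α | s.IsSwap ∧ (s * π).IsSwap} with hQ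
  rcases Set.eq_empty_or_nonempty Q with h | ⟨s₀, hs₀⟩
  · rw [h]; simp
  obtain ⟨hsw, hts⟩ := hs₀
  obtain ⟨p, q, hpq, rfl⟩ := hsw
  obtain ⟨r, u, hru, htt⟩ := hts
  have hπeq : π = Equiv.swap p q * Equiv.swap r u := by
    rw [← htt, swap_mul_self_mul]
  have hsup : ∀ a, π a ≠ a → a = p ∨ a = q ∨ a = r ∨ a = u := by
    intro a ha
    by_contra hcon
    push_neg at hcon
    obtain ⟨h1, h2, h3, h4⟩ := hcon
    apply ha
    rw [hπeq]
    show Equiv.swap p q (Equiv.swap r u a) = a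
    rw [swap_apply_of_ne_of_ne h3 h4, swap_apply_of_ne_of_ne h1 h2]
  have hform : ∀ s ∈ Q, ∃ a, (a = p ∨ a = q ∨ a = r ∨ a = u) ∧ s = Equiv.swap a (π a) := by
    intro s hs
    obtain ⟨a, ha, rfl⟩ := mem_Q_form' hπ hs.1 hs.2
    exact ⟨a, hsup a ha, rfl⟩
  by_cases hd : (r = p ∨ r = q) ∨ (u = p ∨ u = q)
  · rcases hd with h | h
    · refine card3' (x := Equiv.swap p (π p)) (y := Equiv.swap q (π q))
        (z := Equiv.swap u (π u)) ?_
      intro s hs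
      obtain ⟨a, ha, rfl⟩ := hform s hs
      rcases ha with rfl | rfl | rfl | rfl
      · exact Set.mem_insert _ _
      · exact Set.mem_insert_of_mem _ (Set.mem_insert _ _)
      · rcases h with rfl | rfl
        · exact Set.mem_insert _ _
        · exact Set.mem_insert_of_mem _ (Set.mem_insert _ _)
      · exact Set.mem_insert_of_mem _ (Set.mem_insert_of_mem _ rfl)
    · refine card3' (x := Equiv.swap p (π p)) (y := Equiv.swap q (π q))
        (z := Equiv.swap r (π r)) ?_
      intro s hs
      obtain ⟨a, ha, rfl⟩ := hform s hs
      rcases ha with rfl | rfl | rfl | rfl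
      · exact Set.mem_insert _ _
      · exact Set.mem_insert_of_mem _ (Set.mem_insert _ _)
      · exact Set.mem_insert_of_mem _ (Set.mem_insert_of_mem _ rfl)
      · rcases h with rfl | rfl
        · exact Set.mem_insert _ _
        · exact Set.mem_insert_of_mem _ (Set.mem_insert _ _)
  · push_neg at hd
    obtain ⟨⟨hrp, hrq⟩, hup, huq⟩ := hd
    have hπp : π p = q := by
      rw [hπeq]; show Equiv.swap p q (Equiv.swap r u p) = q
      rw [swap_apply_of_ne_of_ne (Ne.symm hrp) (Ne.symm hup), swap_apply_left]
    have hπq : π q = p := by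
      rw [hπeq]; show Equiv.swap p q (Equiv.swap r u q) = p
      rw [swap_apply_of_ne_of_ne (Ne.symm hrq) (Ne.symm huq), swap_apply_right]
    have hπr : π r = u := by
      rw [hπeq]; show Equiv.swap p q (Equiv.swap r u r) = u
      rw [swap_apply_left, swap_apply_of_ne_of_ne hup huq]
    have hπu : π u = r := by
      rw [hπeq]; show Equiv.swap p q (Equiv.swap r u u) = r
      rw [swap_apply_right, swap_apply_of_ne_of_ne hrp hrq]
    refine card3' (x := Equiv.swap p q) (y := Equiv.swap r u) (z := Equiv.swap r u) ?_
    intro s hs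
    obtain ⟨a, ha, rfl⟩ := hform s hs
    rcases ha with rfl | rfl | rfl | rfl
    · rw [hπp]; exact Set.mem_insert _ _
    · rw [hπq, swap_comm a p]; exact Set.mem_insert _ _
    · rw [hπr]; exact Set.mem_insert_of_mem _ (Set.mem_insert _ _)
    · rw [hπu, swap_comm a r]; exact Set.mem_insert_of_mem _ (Set.mem_insert _ _)

lemma cwGen_isSwap {n : ℕ} (hn : 4 ≤ n) {s : Equiv.Perm (Fin n)} (h : s ∈ cwGen n) :
    s.IsSwap := by
  obtain ⟨i, j, rfl, hc⟩ := h
  refine ⟨i, j, ?_, rfl⟩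
  rcases hc with ⟨hi, hji⟩ | ⟨hj, hi⟩ | ⟨hi, hj⟩
  · exact fun h => hji h.symm
  · exact fun h => by rw [h] at hj; omega
  · exact fun h => by rw [h] at hi; omega

lemma CN_le {n : ℕ} (hn : 4 ≤ n) (u v w : Equiv.Perm (Fin n)) (huv : u ≠ v) :
    ((CW n).neighborSet u ∩ (CW n).neighborSet v ∩ (CW n).neighborSet w).ncard ≤ 3 := by
  set π := u⁻¹ * v with hπdef
  have hπ : π ≠ 1 := by
    intro h
    apply huv
    simpa [hπdef] using (eq_of_inv_mul_eq_one h).symm ▸ rfl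
  set Q := {s : Equiv.Perm (Fin n) | s.IsSwap ∧ (s * π).IsSwap} with hQ
  have hsub : (CW n).neighborSet u ∩ (CW n).neighborSet v ∩ (CW n).neighborSet w
      ⊆ (fun s => u * s) '' Q := by
    rintro x ⟨⟨hxu, hxv⟩, -⟩
    obtain ⟨hneu, hmu⟩ := hxu
    obtain ⟨hnev, hmv⟩ := hxv
    have hsw : (u⁻¹ * x).IsSwap := cwGen_isSwap hn hmu
    have htw : (v⁻¹ * x).IsSwap := cwGen_isSwap hn hmv
    have hinv : (u⁻¹ * x)⁻¹ = u⁻¹ * x := by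
      obtain ⟨a, b, -, h⟩ := hsw; rw [h, swap_inv]
    have hinv2 : (v⁻¹ * x)⁻¹ = v⁻¹ * x := by
      obtain ⟨a, b, -, h⟩ := htw; rw [h, swap_inv]
    refine ⟨u⁻¹ * x, ⟨hsw, ?_⟩, by group⟩
    have : (u⁻¹ * x) * π = (v⁻¹ * x)⁻¹ := by
      rw [← hinv, hπdef]; group
    rw [this, hinv2]
    exact htw
  calc ((CW n).neighborSet u ∩ (CW n).neighborSet v ∩ (CW n).neighborSet w).ncard
      ≤ ((fun s => u * s) '' Q).ncard := Set.ncard_le_ncard hsub (Set.toFinite _)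
    _ = Q.ncard := Set.ncard_image_of_injective Q (mul_right_injective u)
    _ ≤ 3 := Q_card' hπ

lemma swap_conj' {α : Type*} [DecidableEq α] {a b c : α} (hab : a ≠ b) (hac : a ≠ c) (hbc : b ≠ c) :
    Equiv.swap a b * Equiv.swap b c * Equiv.swap a b = Equiv.swap a c := by
  ext x
  simp only [Equiv.Perm.mul_apply, Equiv.swap_apply_def]
  split_ifs <;> simp_all

lemma prodP3 {α : Type*} [DecidableEq α] {a b c : α} (hab : a ≠ b) (hac : a ≠ c) (hbc : b ≠ c) :
    Equiv.swap a c * (Equiv.swap a b * Equiv.swap b c) = Equiv.swap a b := by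
  ext x
  simp only [Equiv.Perm.mul_apply, Equiv.swap_apply_def]
  split_ifs <;> simp_all

lemma prodP4 {α : Type*} [DecidableEq α] {a b c : α} (hab : a ≠ b) (hac : a ≠ c) (hbc : b ≠ c) :
    Equiv.swap a c * (Equiv.swap b c * Equiv.swap a b) = Equiv.swap b c := by
  ext x
  simp only [Equiv.Perm.mul_apply, Equiv.swap_apply_def]
  split_ifs <;> simp_all

lemma prodP5 {α : Type*} [DecidableEq α] {a b c : α} (hab : a ≠ b) (hac : a ≠ c) (hbc : b ≠ c) :
    Equiv.swap b c * (Equiv.swap a b * Equiv.swap b c) = Equiv.swap a c := by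
  ext x
  simp only [Equiv.Perm.mul_apply, Equiv.swap_apply_def]
  split_ifs <;> simp_all

end Aux

/-- For n ≥ 4, the maximum number of common neighbors of three distinct vertices of CW_n is 3. -/
theorem stmt3 (n : ℕ) (hn : 4 ≤ n) :
    (∀ u v w : Equiv.Perm (Fin n), u ≠ v → u ≠ w → v ≠ w →
      ((CW n).neighborSet u ∩ (CW n).neighborSet v ∩ (CW n).neighborSet w).ncard ≤ 3) ∧
    (∃ u v w : Equiv.Perm (Fin n), u ≠ v ∧ u ≠ w ∧ v ≠ w ∧
      ((CW n).neighborSet u ∩ (CW n).neighborSet v ∩ (CW n).neighborSet w).ncard = 3) := by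
  open Equiv in
  constructor
  · intro u v w huv _ _
    exact CN_le hn u v w huv
  · set e0 : Fin n := ⟨0, by omega⟩ with he0
    set e1 : Fin n := ⟨1, by omega⟩ with he1
    set e2 : Fin n := ⟨2, by omega⟩ with he2
    have h01 : e0 ≠ e1 := Fin.ne_of_val_ne (by norm_num)
    have h02 : e0 ≠ e2 := Fin.ne_of_val_ne (by norm_num)
    have h12 : e1 ≠ e2 := Fin.ne_of_val_ne (by norm_num)
    refine ⟨Equiv.swap e0 e1, Equiv.swap e0 e2, Equiv.swap e1 e2, ?_, ?_, ?_, ?_⟩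
    · intro h
      have := Equiv.ext_iff.mp h e1
      rw [swap_apply_right, swap_apply_of_ne_of_ne (Ne.symm h01) h12] at this
      exact h01 this
    · intro h
      have := Equiv.ext_iff.mp h e0
      rw [swap_apply_left, swap_apply_of_ne_of_ne h01 h02] at this
      exact h01 this.symm
    · intro h
      have := Equiv.ext_iff.mp h e0
      rw [swap_apply_left, swap_apply_of_ne_of_ne h01 h02] at this
      exact h02 this.symm
    -- memberships of the three generators
    have m01 : Equiv.swap e0 e1 ∈ cwGen n := ⟨e0, e1, rfl, Or.inl ⟨rfl, Ne.symm h01⟩⟩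
    have m02 : Equiv.swap e0 e2 ∈ cwGen n := ⟨e0, e2, rfl, Or.inl ⟨rfl, Ne.symm h02⟩⟩
    have m12 : Equiv.swap e1 e2 ∈ cwGen n :=
      ⟨e1, e2, rfl, Or.inr (Or.inl ⟨by norm_num, le_refl 1⟩)⟩
    set c : Equiv.Perm (Fin n) := Equiv.swap e0 e1 * Equiv.swap e1 e2 with hc
    set d : Equiv.Perm (Fin n) := Equiv.swap e1 e2 * Equiv.swap e0 e1 with hd
    -- sign facts for ≠ proofs
    have hsgn : ∀ s t : Equiv.Perm (Fin n), Equiv.Perm.sign s = -1 → Equiv.Perm.sign t = 1 →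
        s ≠ t := by
      intro s t hs ht h
      rw [h, ht] at hs
      exact absurd hs (by decide)
    have sgn01 : Equiv.Perm.sign (Equiv.swap e0 e1) = -1 := Equiv.Perm.sign_swap h01
    have sgn02 : Equiv.Perm.sign (Equiv.swap e0 e2) = -1 := Equiv.Perm.sign_swap h02
    have sgn12 : Equiv.Perm.sign (Equiv.swap e1 e2) = -1 := Equiv.Perm.sign_swap h12
    have sgn1 : Equiv.Perm.sign (1 : Equiv.Perm (Fin n)) = 1 := Equiv.Perm.sign_one
    have sgnc : Equiv.Perm.sign c = 1 := by
      rw [hc, Equiv.Perm.sign_mul, sgn01, sgn12]; decide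
    have sgnd : Equiv.Perm.sign d = 1 := by
      rw [hd, Equiv.Perm.sign_mul, sgn12, sgn01]; decide
    -- the subset {1, c, d} of common neighbors
    have hmem : ({1, c, d} : Set (Equiv.Perm (Fin n)))
        ⊆ (CW n).neighborSet (Equiv.swap e0 e1) ∩ (CW n).neighborSet (Equiv.swap e0 e2)
          ∩ (CW n).neighborSet (Equiv.swap e1 e2) := by
      rintro x (rfl | rfl | rfl)
      · refine ⟨⟨⟨hsgn _ _ sgn01 sgn1, ?_⟩, ⟨hsgn _ _ sgn02 sgn1, ?_⟩⟩,
          ⟨hsgn _ _ sgn12 sgn1, ?_⟩⟩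
        · rw [mul_one, swap_inv]; exact m01
        · rw [mul_one, swap_inv]; exact m02
        · rw [mul_one, swap_inv]; exact m12
      · refine ⟨⟨⟨hsgn _ _ sgn01 sgnc, ?_⟩, ⟨hsgn _ _ sgn02 sgnc, ?_⟩⟩,
          ⟨hsgn _ _ sgn12 sgnc, ?_⟩⟩
        · rw [swap_inv, hc, swap_mul_self_mul]; exact m12
        · rw [swap_inv, hc, prodP3 h01 h02 h12]; exact m01
        · rw [swap_inv, hc, prodP5 h01 h02 h12]; exact m02
      · refine ⟨⟨⟨hsgn _ _ sgn01 sgnd, ?_⟩, ⟨hsgn _ _ sgn02 sgnd, ?_⟩⟩,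
          ⟨hsgn _ _ sgn12 sgnd, ?_⟩⟩
        · rw [swap_inv, hd, ← mul_assoc, swap_conj' h01 h02 h12]; exact m02
        · rw [swap_inv, hd, prodP4 h01 h02 h12]; exact m12
        · rw [swap_inv, hd, swap_mul_self_mul]; exact m01
    -- distinctness of 1, c, d via evaluation at e0
    have hce0 : c e0 = e1 := by
      rw [hc]
      show Equiv.swap e0 e1 (Equiv.swap e1 e2 e0) = e1
      rw [swap_apply_of_ne_of_ne h01 h02, swap_apply_left]
    have hde0 : d e0 = e2 := by
      rw [hd]
      show Equiv.swap e1 e2 (Equiv.swap e0 e1 e0) = e2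
      rw [swap_apply_left, swap_apply_left]
    have h1c : (1 : Equiv.Perm (Fin n)) ≠ c := by
      intro h
      have := Equiv.ext_iff.mp h e0
      rw [hce0] at this; exact h01 (this.symm ▸ this)
    have h1d : (1 : Equiv.Perm (Fin n)) ≠ d := by
      intro h
      have := Equiv.ext_iff.mp h e0
      rw [hde0] at this; exact h02 (this.symm ▸ this)
    have hcd : c ≠ d := by
      intro h
      have := Equiv.ext_iff.mp h e0
      rw [hce0, hde0] at this; exact h12 this
    have hcard3 : ({1, c, d} : Set (Equiv.Perm (Fin n))).ncard = 3 := by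
      rw [Set.ncard_insert_of_notMem (by simp [h1c, h1d]),
        Set.ncard_insert_of_notMem (by simp [hcd]), Set.ncard_singleton]
    refine le_antisymm (CN_le hn _ _ _ ?_) ?_
    · intro h
      have := Equiv.ext_iff.mp h e1
      rw [swap_apply_right, swap_apply_of_ne_of_ne (Ne.symm h01) h12] at this
      exact h01 this
    · calc (3 : ℕ) = ({1, c, d} : Set (Equiv.Perm (Fin n))).ncard := hcard3.symm
        _ ≤ _ := Set.ncard_le_ncard hmem (Set.toFinite _)
end

section
/- Let G be a k-regular connected simple graph and let r = max{|CN_G(u, v, w)| : {u, v, w} ⊆ V(G), u, v, w distinct} be the maximum number of common neighbors of any three distinct vertices of G. Then the 3-path-connectivity of G satisfies π₃(G) ≤ ⌊(3k − r)/4⌋. -/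
/-- An Ω-path in `G`: a path containing every vertex of Ω. -/
structure OmegaPath {V : Type*} (G : SimpleGraph V) (Ω : Set V) where
  u : V
  v : V
  walk : G.Walk u v
  isPath : walk.IsPath
  contains : ∀ x ∈ Ω, x ∈ walk.support

/-- Two Ω-paths are internally disjoint if their vertex sets intersect exactly in Ω
and they share no edge. -/
def OmegaPath.InternallyDisjoint {V : Type*} {G : SimpleGraph V} {Ω : Set V}
    (P Q : OmegaPath G Ω) : Prop :=
  {x | x ∈ P.walk.support} ∩ {x | x ∈ Q.walk.support} = Ω ∧
  ∀ e ∈ P.walk.edges, e ∉ Q.walk.edges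

/-- π_G(Ω): the maximum number of pairwise internally disjoint Ω-paths in G. -/
noncomputable def piOmega {V : Type*} (G : SimpleGraph V) (Ω : Set V) : ℕ :=
  sSup {k | ∃ f : Fin k → OmegaPath G Ω,
    ∀ i j, i ≠ j → (f i).InternallyDisjoint (f j)}

/-- The k-path-connectivity π_k(G) = min{π_G(Ω) : Ω ⊆ V(G), |Ω| = k}. -/
noncomputable def pathConn {V : Type*} (G : SimpleGraph V) (k : ℕ) : ℕ :=
  sInf {m | ∃ Ω : Finset V, Ω.card = k ∧ piOmega G (Ω : Set V) = m}

section Aux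

variable {V : Type*} {G : SimpleGraph V}

private lemma aux_mem_support_of_mem_edge {a b x : V} (p : G.Walk a b) {e : Sym2 V}
    (he : e ∈ p.edges) (hx : x ∈ e) : x ∈ p.support := by
  induction e with
  | _ y z =>
    rcases Sym2.mem_iff.mp hx with rfl | rfl
    · exact p.fst_mem_support_of_mem_edges he
    · exact p.snd_mem_support_of_mem_edges he

private lemma aux_exists_incident_edge {a b x : V} (p : G.Walk a b) (hnil : ¬ p.Nil)
    (hx : x ∈ p.support) : ∃ e ∈ p.edges, x ∈ e := by
  induction p with
  | nil => exact absurd SimpleGraph.Walk.Nil.nil hnil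
  | @cons a c b h q ih =>
    rw [SimpleGraph.Walk.support_cons, List.mem_cons] at hx
    rcases hx with rfl | hx
    · exact ⟨s(x, c), by simp, by simp⟩
    · by_cases hq : q.Nil
      · rw [SimpleGraph.Walk.nil_iff_support_eq] at hq
        rw [hq, List.mem_singleton] at hx
        subst hx
        exact ⟨s(a, x), by simp, by simp⟩
      · obtain ⟨e, he, hxe⟩ := ih hq hx
        exact ⟨e, by simp [he], hxe⟩

/-- An internal vertex of a path has two distinct incident edges. -/
private lemma aux_two_incident_edges {a b x : V} (p : G.Walk a b) (hp : p.IsPath)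
    (hx : x ∈ p.support) (hxa : x ≠ a) (hxb : x ≠ b) :
    ∃ e₁ ∈ p.edges, ∃ e₂ ∈ p.edges, e₁ ≠ e₂ ∧ x ∈ e₁ ∧ x ∈ e₂ := by
  induction p with
  | nil => simp at hx; exact absurd hx hxa
  | @cons a c b h q ih =>
    rw [SimpleGraph.Walk.support_cons, List.mem_cons] at hx
    rcases hx with rfl | hx
    · exact absurd rfl hxa
    · have hq : q.IsPath := hp.of_cons
      have hanotq : a ∉ q.support := by
        have := hp.support_nodup
        rw [SimpleGraph.Walk.support_cons] at this
        exact (List.nodup_cons.mp this).1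
      by_cases hxc : x = c
      · subst hxc
        have hqnil : ¬ q.Nil := by
          intro hn
          rw [SimpleGraph.Walk.nil_iff_support_eq] at hn
          have hb := q.end_mem_support
          rw [hn, List.mem_singleton] at hb
          exact hxb hb.symm
        obtain ⟨e₂, he₂, hxe₂⟩ := aux_exists_incident_edge q hqnil hx
        refine ⟨s(a, x), by simp, e₂, by simp [he₂], ?_, by simp, hxe₂⟩
        intro hcontra
        have : a ∈ q.support := aux_mem_support_of_mem_edge q (hcontra ▸ he₂) (by simp)
        exact hanotq this
      · obtain ⟨e₁, he₁, e₂, he₂, hne, h1, h2⟩ := ih hq hx hxc hxb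
        exact ⟨e₁, by simp [he₁], e₂, by simp [he₂], hne, h1, h2⟩

/-- In a path, the start vertex is incident to at most one edge. -/
private lemma aux_start_edges {a b : V} (q : G.Walk a b) (hq : q.IsPath) {e₁ e₂ : Sym2 V}
    (h1 : e₁ ∈ q.edges) (h2 : e₂ ∈ q.edges) (hx1 : a ∈ e₁) (hx2 : a ∈ e₂) : e₁ = e₂ := by
  cases q with
  | nil => simp at h1
  | @cons a c b h q' =>
    have hanotq : a ∉ q'.support := by
      have := hq.support_nodup
      rw [SimpleGraph.Walk.support_cons] at this
      exact (List.nodup_cons.mp this).1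
    rw [SimpleGraph.Walk.edges_cons, List.mem_cons] at h1 h2
    rcases h1 with rfl | h1
    · rcases h2 with rfl | h2
      · rfl
      · exact absurd (aux_mem_support_of_mem_edge q' h2 hx2) hanotq
    · exact absurd (aux_mem_support_of_mem_edge q' h1 hx1) hanotq

/-- In a path, any vertex is incident to at most two edges. -/
private lemma aux_at_most_two {a b x : V} (p : G.Walk a b) (hp : p.IsPath) {e₁ e₂ e₃ : Sym2 V}
    (h1 : e₁ ∈ p.edges) (h2 : e₂ ∈ p.edges) (h3 : e₃ ∈ p.edges)
    (hx1 : x ∈ e₁) (hx2 : x ∈ e₂) (hx3 : x ∈ e₃) :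
    e₁ = e₂ ∨ e₁ = e₃ ∨ e₂ = e₃ := by
  induction p with
  | nil => simp at h1
  | @cons a c b h q ih =>
    have hq : q.IsPath := hp.of_cons
    have hanotq : a ∉ q.support := by
      have := hp.support_nodup
      rw [SimpleGraph.Walk.support_cons] at this
      exact (List.nodup_cons.mp this).1
    rw [SimpleGraph.Walk.edges_cons, List.mem_cons] at h1 h2 h3
    rcases h1 with rfl | h1 <;> rcases h2 with rfl | h2 <;> rcases h3 with rfl | h3
    · exact Or.inl rfl
    · exact Or.inl rfl
    · exact Or.inr (Or.inl rfl)
    · right; right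
      rcases Sym2.mem_iff.mp hx1 with rfl | rfl
      · exact absurd (aux_mem_support_of_mem_edge q h2 hx2) hanotq
      · exact aux_start_edges q hq h2 h3 hx2 hx3
    · exact Or.inr (Or.inr rfl)
    · right; left
      rcases Sym2.mem_iff.mp hx2 with rfl | rfl
      · exact absurd (aux_mem_support_of_mem_edge q h1 hx1) hanotq
      · exact aux_start_edges q hq h1 h3 hx1 hx3
    · left
      rcases Sym2.mem_iff.mp hx3 with rfl | rfl
      · exact absurd (aux_mem_support_of_mem_edge q h1 hx1) hanotq
      · exact aux_start_edges q hq h1 h2 hx1 hx2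
    · exact ih hq h1 h2 h3

private lemma aux_ne_of_isPath {a b : V} (p : G.Walk a b) (hp : p.IsPath) (hnil : ¬ p.Nil) :
    a ≠ b := by
  cases p with
  | nil => exact absurd SimpleGraph.Walk.Nil.nil hnil
  | cons h q =>
    have hnd := hp.support_nodup
    rw [SimpleGraph.Walk.support_cons] at hnd
    intro hab
    exact (List.nodup_cons.mp hnd).1 (by rw [hab]; exact q.end_mem_support)

end Aux

open SimpleGraph Finset in
private lemma aux_main {V : Type*} [Fintype V] [DecidableEq V] {G : SimpleGraph V} {k r n : ℕ} {u v w : V}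
    (hreg : ∀ v : V, (G.neighborSet v).ncard = k)
    (huv : u ≠ v) (huw : u ≠ w) (hvw : v ≠ w)
    (hrcard : r = (G.neighborSet u ∩ G.neighborSet v ∩ G.neighborSet w).ncard)
    (f : Fin n → OmegaPath G (({u, v, w} : Finset V) : Set V))
    (hf : ∀ i j, i ≠ j → (f i).InternallyDisjoint (f j)) :
    n * 4 + r ≤ 3 * k := by
  classical
  obtain ⟨Ωf, hΩdef⟩ : ∃ s : Finset V, s = ({u, v, w} : Finset V) := ⟨_, rfl⟩
  have hu : u ∈ Ωf := by simp [hΩdef]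
  have hv : v ∈ Ωf := by simp [hΩdef]
  have hw : w ∈ Ωf := by simp [hΩdef]
  have hΩcard : Ωf.card = 3 := by
    rw [hΩdef, Finset.card_insert_of_notMem (by simp [huv, huw]),
        Finset.card_insert_of_notMem (by simp [hvw]), Finset.card_singleton]
  set Eg : Fin n → Finset (Sym2 V) := fun i => (f i).walk.edges.toFinset with hEg
  set U : Finset (Sym2 V) := Finset.univ.biUnion Eg with hU
  set Inc : V → Finset (Sym2 V) := fun a => G.incidenceFinset a with hInc
  have hIncMem : ∀ (a : V) (e : Sym2 V), e ∈ Inc a ↔ e ∈ G.edgeSet ∧ a ∈ e := by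
    intro a e
    rw [hInc]
    simp only [SimpleGraph.mem_incidenceFinset]
    rfl
  have hIncCard : ∀ a : V, (Inc a).card = k := by
    intro a
    rw [hInc]
    simp only [SimpleGraph.card_incidenceFinset_eq_degree]
    rw [← hreg a, SimpleGraph.degree, SimpleGraph.neighborFinset_def,
        Set.ncard_eq_toFinset_card']
  have hdisj : ∀ i j : Fin n, i ≠ j → Disjoint (Eg i) (Eg j) := by
    intro i j hij
    rw [Finset.disjoint_left]
    intro e hei hej
    exact (hf i j hij).2 e (by simpa [hEg] using hei) (by simpa [hEg] using hej)
  have hperpath : ∀ i : Fin n, 4 ≤ ∑ a ∈ Ωf, (Eg i ∩ Inc a).card := by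
    intro i
    set P := f i with hP
    have hmem : ∀ z ∈ Ωf, z ∈ P.walk.support := fun z hz =>
      P.contains z (Finset.mem_coe.mpr (hΩdef ▸ hz))
    have hnil : ¬ P.walk.Nil := by
      intro hn
      rw [SimpleGraph.Walk.nil_iff_support_eq] at hn
      have h1 := hmem u hu
      have h2 := hmem v hv
      rw [hn, List.mem_singleton] at h1 h2
      exact huv (h1.trans h2.symm)
    have hfilter : ∀ a : V, Eg i ∩ Inc a = (Eg i).filter (fun e => a ∈ e) := by
      intro a
      ext e
      simp only [Finset.mem_inter, Finset.mem_filter, hIncMem]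
      constructor
      · rintro ⟨he, -, hae⟩; exact ⟨he, hae⟩
      · rintro ⟨he, hae⟩
        exact ⟨he, P.walk.edges_subset_edgeSet (by simpa [hEg] using he), hae⟩
    have hone : ∀ z ∈ Ωf, 1 ≤ (Eg i ∩ Inc z).card := by
      intro z hz
      obtain ⟨e, he, hze⟩ := aux_exists_incident_edge P.walk hnil (hmem z hz)
      rw [hfilter]
      exact Finset.card_pos.mpr ⟨e, Finset.mem_filter.mpr ⟨by simp [hEg]; exact he, hze⟩⟩
    obtain ⟨z, hz⟩ : (Ωf \ (insert P.u {P.v} : Finset V)).Nonempty := by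
      rw [← Finset.card_pos]
      have h2 : (insert P.u {P.v} : Finset V).card ≤ 2 := by
        apply le_trans (Finset.card_insert_le _ _); simp
      have h3 := Finset.card_le_card_sdiff_add_card (s := Ωf) (t := (insert P.u {P.v} : Finset V))
      omega
    rw [Finset.mem_sdiff] at hz
    obtain ⟨hzΩ, hz2⟩ := hz
    simp only [Finset.mem_insert, Finset.mem_singleton, not_or] at hz2
    have htwo : 2 ≤ (Eg i ∩ Inc z).card := by
      obtain ⟨e₁, he₁, e₂, he₂, hne, hc1, hc2⟩ :=
        aux_two_incident_edges P.walk P.isPath (hmem z hzΩ) hz2.1 hz2.2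
      rw [hfilter]
      exact Finset.one_lt_card.mpr ⟨e₁, Finset.mem_filter.mpr ⟨by simp [hEg]; exact he₁, hc1⟩,
        e₂, Finset.mem_filter.mpr ⟨by simp [hEg]; exact he₂, hc2⟩, hne⟩
    have hrest : 2 ≤ ∑ a ∈ Ωf.erase z, (Eg i ∩ Inc a).card := by
      calc (2 : ℕ) = (Ωf.erase z).card := by rw [Finset.card_erase_of_mem hzΩ, hΩcard]
        _ = ∑ _a ∈ Ωf.erase z, 1 := by rw [Finset.card_eq_sum_ones]
        _ ≤ _ := Finset.sum_le_sum fun a ha => hone a (Finset.mem_of_mem_erase ha)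
    calc (4 : ℕ) = 2 + 2 := by norm_num
      _ ≤ (Eg i ∩ Inc z).card + ∑ a ∈ Ωf.erase z, (Eg i ∩ Inc a).card := add_le_add htwo hrest
      _ = ∑ a ∈ Ωf, (Eg i ∩ Inc a).card := Finset.add_sum_erase Ωf (fun a => (Eg i ∩ Inc a).card) hzΩ
  have hsplit : ∀ a : V, (U ∩ Inc a).card = ∑ i : Fin n, (Eg i ∩ Inc a).card := by
    intro a
    rw [hU, Finset.biUnion_inter]
    exact Finset.card_biUnion fun i _ j _ hij =>
      (hdisj i j hij).mono Finset.inter_subset_left Finset.inter_subset_left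
  have hsum1 : n * 4 ≤ ∑ a ∈ Ωf, (U ∩ Inc a).card := by
    calc n * 4 = ∑ _i : Fin n, 4 := by simp [Finset.sum_const, mul_comm]
      _ ≤ ∑ i : Fin n, ∑ a ∈ Ωf, (Eg i ∩ Inc a).card := Finset.sum_le_sum fun i _ => hperpath i
      _ = ∑ a ∈ Ωf, ∑ i : Fin n, (Eg i ∩ Inc a).card := Finset.sum_comm
      _ = ∑ a ∈ Ωf, (U ∩ Inc a).card := by
          exact Finset.sum_congr rfl fun a _ => (hsplit a).symm
  have hpart : ∑ a ∈ Ωf, (U ∩ Inc a).card + ∑ a ∈ Ωf, (Inc a \ U).card = 3 * k := by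
    rw [← Finset.sum_add_distrib]
    have hpt : ∀ a ∈ Ωf, (U ∩ Inc a).card + (Inc a \ U).card = k := by
      intro a _
      rw [Finset.inter_comm, Finset.card_inter_add_card_sdiff, hIncCard]
    rw [Finset.sum_congr rfl hpt, Finset.sum_const, hΩcard, smul_eq_mul]
  set C : Finset V := G.neighborFinset u ∩ G.neighborFinset v ∩ G.neighborFinset w with hC
  have hCcard : C.card = r := by
    have hco : ((C : Finset V) : Set V) =
        G.neighborSet u ∩ G.neighborSet v ∩ G.neighborSet w := by
      ext y
      simp [hC, and_assoc]
    rw [hrcard, ← hco, Set.ncard_coe_finset]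
  have hCadj : ∀ x ∈ C, G.Adj u x ∧ G.Adj v x ∧ G.Adj w x := by
    intro x hx
    rw [hC] at hx
    simp only [Finset.mem_inter, SimpleGraph.mem_neighborFinset] at hx
    exact ⟨hx.1.1, hx.1.2, hx.2⟩
  have hCnotΩ : ∀ x ∈ C, x ∉ Ωf := by
    intro x hx hxΩ
    obtain ⟨h1, h2, h3⟩ := hCadj x hx
    rw [hΩdef] at hxΩ
    simp only [Finset.mem_insert, Finset.mem_singleton] at hxΩ
    rcases hxΩ with rfl | rfl | rfl
    · exact G.loopless.irrefl x h1
    · exact G.loopless.irrefl x h2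
    · exact G.loopless.irrefl x h3
  have hx_unused : ∀ x, x ∈ C → ∃ a, a ∈ Ωf ∧ G.Adj a x ∧ s(a, x) ∉ U := by
    intro x hx
    obtain ⟨hux, hvx, hwx⟩ := hCadj x hx
    by_contra hcon
    push_neg at hcon
    have hu' : s(u, x) ∈ U := hcon u hu hux
    have hv' : s(v, x) ∈ U := hcon v hv hvx
    have hw' : s(w, x) ∈ U := hcon w hw hwx
    rw [hU, Finset.mem_biUnion] at hu' hv' hw'
    obtain ⟨i, -, hiu⟩ := hu'
    obtain ⟨j, -, hjv⟩ := hv'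
    obtain ⟨l, -, hlw⟩ := hw'
    have hxsupp : ∀ (m : Fin n) (e : Sym2 V), e ∈ Eg m → x ∈ e → x ∈ (f m).walk.support := by
      intro m e he hxe
      exact aux_mem_support_of_mem_edge _ (by simpa [hEg] using he) hxe
    have hsame : ∀ m m' : Fin n, m ≠ m' → ∀ e ∈ Eg m, ∀ e' ∈ Eg m', x ∈ e → x ∈ e' → False := by
      intro m m' hmm' e he e' he' hxe hxe'
      have h1 := hxsupp m e he hxe
      have h2 := hxsupp m' e' he' hxe'
      have hset := (hf m m' hmm').1
      have hxΩ : x ∈ ((({u, v, w} : Finset V) : Finset V) : Set V) := by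
        rw [← hset]; exact ⟨h1, h2⟩
      refine hCnotΩ x hx ?_
      rw [hΩdef]
      exact Finset.mem_coe.mp hxΩ
    have hij : i = j := by
      by_contra hne
      exact hsame i j hne _ hiu _ hjv (by simp) (by simp)
    have hil : i = l := by
      by_contra hne
      exact hsame i l hne _ hiu _ hlw (by simp) (by simp)
    subst hij
    subst hil
    have hxu : x ≠ u := fun h => G.loopless.irrefl u (h ▸ hux)
    have hxv : x ≠ v := fun h => G.loopless.irrefl v (h ▸ hvx)
    have hxw : x ≠ w := fun h => G.loopless.irrefl w (h ▸ hwx)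
    have hEgedges : ∀ e ∈ Eg i, e ∈ (f i).walk.edges := by
      intro e he
      simpa [hEg] using he
    have := aux_at_most_two (x := x) (f i).walk (f i).isPath (hEgedges _ hiu) (hEgedges _ hjv)
      (hEgedges _ hlw) (by simp) (by simp) (by simp)
    rcases this with h | h | h
    · rw [Sym2.eq_iff] at h
      rcases h with ⟨h1, -⟩ | ⟨h1, h2⟩
      · exact huv h1
      · exact hxu h1.symm
    · rw [Sym2.eq_iff] at h
      rcases h with ⟨h1, -⟩ | ⟨h1, h2⟩
      · exact huw h1
      · exact hxu h1.symm
    · rw [Sym2.eq_iff] at h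
      rcases h with ⟨h1, -⟩ | ⟨h1, h2⟩
      · exact hvw h1
      · exact hxv h1.symm
  choose g hg using hx_unused
  have hrle : r ≤ ∑ a ∈ Ωf, (Inc a \ U).card := by
    have himg : (C.attach.image (fun x => s(g x.1 x.2, x.1))).card = r := by
      rw [Finset.card_image_of_injOn, Finset.card_attach, hCcard]
      intro x _ y _ hxy
      rw [Sym2.eq_iff] at hxy
      rcases hxy with ⟨-, h⟩ | ⟨h1, h2⟩
      · exact Subtype.ext h
      · exact absurd ((hg x.1 x.2).1) (h1 ▸ hCnotΩ y.1 y.2)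
    have himgsub : C.attach.image (fun x => s(g x.1 x.2, x.1)) ⊆
        Ωf.biUnion (fun a => Inc a \ U) := by
      intro e he
      simp only [Finset.mem_image, Finset.mem_attach, true_and] at he
      obtain ⟨x, hxe⟩ := he
      obtain ⟨ha, hadj, hnotU⟩ := hg x.1 x.2
      rw [Finset.mem_biUnion]
      refine ⟨g x.1 x.2, ha, ?_⟩
      rw [← hxe]
      exact Finset.mem_sdiff.mpr ⟨(hIncMem _ _).mpr ⟨hadj, by simp⟩, hnotU⟩
    calc r = _ := himg.symm
      _ ≤ (Ωf.biUnion fun a => Inc a \ U).card := Finset.card_le_card himgsub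
      _ ≤ ∑ a ∈ Ωf, (Inc a \ U).card := Finset.card_biUnion_le
  calc n * 4 + r ≤ ∑ a ∈ Ωf, (U ∩ Inc a).card + ∑ a ∈ Ωf, (Inc a \ U).card :=
        add_le_add hsum1 hrle
    _ = 3 * k := hpart

/-- For a k-regular connected graph G, with r the maximum number of common neighbors of
any three distinct vertices, π₃(G) ≤ ⌊(3k − r)/4⌋. -/
theorem stmt8 {V : Type*} [Fintype V] (G : SimpleGraph V) (k r : ℕ)
    (hreg : ∀ v : V, (G.neighborSet v).ncard = k) (hconn : G.Connected)
    (hr : IsGreatest {m : ℕ | ∃ u v w : V, u ≠ v ∧ u ≠ w ∧ v ≠ w ∧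
      m = (G.neighborSet u ∩ G.neighborSet v ∩ G.neighborSet w).ncard} r) :
    pathConn G 3 ≤ (3 * k - r) / 4 := by
  classical
  obtain ⟨⟨u, v, w, huv, huw, hvw, hrcard⟩, -⟩ := hr
  have hΩcard : ({u, v, w} : Finset V).card = 3 := by
    rw [Finset.card_insert_of_notMem (by simp [huv, huw]),
        Finset.card_insert_of_notMem (by simp [hvw]), Finset.card_singleton]
  have hmem : piOmega G ((({u, v, w} : Finset V) : Finset V) : Set V) ∈
      {m | ∃ Ω : Finset V, Ω.card = 3 ∧ piOmega G (Ω : Set V) = m} :=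
    ⟨{u, v, w}, hΩcard, rfl⟩
  refine le_trans (Nat.sInf_le hmem) ?_
  unfold piOmega
  refine csSup_le ⟨0, ?_⟩ ?_
  · exact ⟨Fin.elim0, fun i _ _ => i.elim0⟩
  intro n hn
  obtain ⟨f, hf⟩ := hn
  rw [Nat.le_div_iff_mul_le (by norm_num)]
  exact Nat.le_sub_of_add_le (aux_main hreg huv huw hvw hrcard f hf)
end

section
/- For every integer n ≥ 4 and any two distinct indices i, j ∈ {1,…,n}, the number of edges of CW_n with one endpoint in CW_n^i and the other endpoint in CW_n^j equals 3·(n − 2)!. -/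
lemma cardPermTwo {n : ℕ} (a b c d : Fin n) (hab : a ≠ b) (hcd : c ≠ d) :
    Set.ncard {σ : Equiv.Perm (Fin n) | σ a = c ∧ σ b = d} = Nat.factorial (n - 2) := by
  classical
  set σ0 : Equiv.Perm (Fin n) := Equiv.swap (Equiv.swap a c b) d * Equiv.swap a c with hσ0
  have hec : Equiv.swap a c b ≠ c := by
    intro h
    exact hab (((Equiv.swap a c).injective (by rw [Equiv.swap_apply_left, h])).symm)
  have h0a : σ0 a = c := by
    simp only [hσ0, Equiv.Perm.mul_apply, Equiv.swap_apply_left]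
    exact Equiv.swap_apply_of_ne_of_ne (fun h => hec h.symm) hcd
  have h0b : σ0 b = d := by
    simp only [hσ0, Equiv.Perm.mul_apply, Equiv.swap_apply_left]
  have e1 : {σ : Equiv.Perm (Fin n) | σ a = c ∧ σ b = d} ≃
      {σ : Equiv.Perm (Fin n) | σ a = a ∧ σ b = b} := by
    refine (Equiv.mulLeft σ0⁻¹).subtypeEquiv fun σ => ?_
    simp only [Set.mem_setOf_eq, Equiv.coe_mulLeft, Equiv.Perm.mul_apply]
    constructor
    · rintro ⟨h1, h2⟩
      rw [h1, h2, ← h0a, ← h0b]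
      simp
    · rintro ⟨h1, h2⟩
      constructor
      · have := congrArg σ0 h1; simpa [h0a] using this
      · have := congrArg σ0 h2; simpa [h0b] using this
  have e2 : {σ : Equiv.Perm (Fin n) | σ a = a ∧ σ b = b} ≃
      {f : Equiv.Perm (Fin n) // ∀ x, ¬(x ≠ a ∧ x ≠ b) → f x = x} := by
    refine Equiv.subtypeEquivRight fun σ => ?_
    constructor
    · rintro ⟨h1, h2⟩ x hx
      rcases not_and_or.mp hx with h | h
      · rw [not_ne_iff.mp h, h1]
      · rw [not_ne_iff.mp h, h2]
    · intro h
      exact ⟨h a (by simp), h b (by simp)⟩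
  have e3 : Equiv.Perm {x : Fin n // x ≠ a ∧ x ≠ b} ≃
      {f : Equiv.Perm (Fin n) // ∀ x, ¬(x ≠ a ∧ x ≠ b) → f x = x} :=
    Equiv.Perm.subtypeEquivSubtypePerm _
  have hcard : Fintype.card {x : Fin n // x ≠ a ∧ x ≠ b} = n - 2 := by
    rw [Fintype.card_subtype]
    have : (Finset.univ.filter fun x : Fin n => x ≠ a ∧ x ≠ b) = Finset.univ \ {a, b} := by
      ext x; simp [and_comm]
    rw [this, Finset.card_sdiff_of_subset (by simp), Finset.card_pair hab, Finset.card_univ,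
      Fintype.card_fin]
  calc Set.ncard {σ : Equiv.Perm (Fin n) | σ a = c ∧ σ b = d}
      = Nat.card {σ : Equiv.Perm (Fin n) | σ a = c ∧ σ b = d} :=
        (Nat.card_coe_set_eq _).symm
    _ = Nat.card (Equiv.Perm {x : Fin n // x ≠ a ∧ x ≠ b}) :=
        Nat.card_congr (e1.trans (e2.trans e3.symm))
    _ = Nat.factorial (n - 2) := by
        rw [Nat.card_eq_fintype_card, Fintype.card_perm, hcard]


lemma mainAux {n : ℕ} (hn : 4 ≤ n) (i j : Fin n) (hij : i ≠ j) (a : Fin n)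
    (ha : (a : ℕ) = n - 1) :
    {e ∈ (CW n).edgeSet | ∃ u v : Equiv.Perm (Fin n),
        e = s(u, v) ∧ u a = i ∧ v a = j}.ncard = 3 * Nat.factorial (n - 2) := by
  classical
  -- the three relevant generator partners of position a = n-1
  set k0 : Fin n := ⟨0, by omega⟩ with hk0
  set k1 : Fin n := ⟨1, by omega⟩ with hk1
  set k2 : Fin n := ⟨n - 2, by omega⟩ with hk2
  have hk0a : k0 ≠ a := fun h => by have := congrArg Fin.val h; simp [hk0, ha] at this; omega
  have hk1a : k1 ≠ a := fun h => by have := congrArg Fin.val h; simp [hk1, ha] at this; omega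
  have hk2a : k2 ≠ a := fun h => by have := congrArg Fin.val h; simp [hk2, ha] at this; omega
  -- the edge-producing map and its domain
  set F : Fin n → Set (Sym2 (Equiv.Perm (Fin n))) := fun k =>
    (fun u => s(u, u * Equiv.swap k a)) '' {u : Equiv.Perm (Fin n) | u a = i ∧ u k = j}
    with hF
  -- each F k lands inside the set and they cover it
  have key : {e ∈ (CW n).edgeSet | ∃ u v : Equiv.Perm (Fin n),
      e = s(u, v) ∧ u a = i ∧ v a = j} = F k0 ∪ F k1 ∪ F k2 := by
    ext e
    constructor
    · rintro ⟨he, u, v, rfl, hu, hv⟩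
      rw [SimpleGraph.mem_edgeSet] at he
      obtain ⟨hne, p, q, hs, hc⟩ := he
      have hv' : v = u * Equiv.swap p q := by rw [← hs]; group
      subst hv'
      rw [Equiv.Perm.mul_apply] at hv
      have hne' : Equiv.swap p q a ≠ a := by
        intro h; rw [h, hu] at hv; exact hij hv
      have haq : a = p ∨ a = q := by
        by_contra h
        push_neg at h
        exact hne' (Equiv.swap_apply_of_ne_of_ne h.1 h.2)
      rcases hc with ⟨hp0, hqp⟩ | ⟨hq1, hp1⟩ | ⟨hp1, hq1⟩
      · -- swap p q with p = 0; since a ≠ p, a = q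
        have hq : q = a := by
          rcases haq with h | h
          · exfalso; rw [← h] at hp0; omega
          · exact h.symm
        have hp : p = k0 := Fin.ext (by simp [hk0, hp0])
        subst hp; subst hq
        exact Or.inl (Or.inl ⟨u, ⟨hu, by rwa [Equiv.swap_apply_right] at hv⟩, rfl⟩)
      · -- swap p (p+1); a = q, p = n-2
        have hq : q = a := by
          rcases haq with h | h
          · exfalso; rw [← h, ha] at hq1; omega
          · exact h.symm
        subst hq
        have hp : p = k2 := Fin.ext (by simp [hk2]; rw [ha] at hq1; omega)
        subst hp
        exact Or.inr ⟨u, ⟨hu, by rwa [Equiv.swap_apply_right] at hv⟩, rfl⟩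
      · -- swap 1 (n-1)
        have hq : q = a := Fin.ext (by rw [hq1, ha])
        subst hq
        have hp : p = k1 := Fin.ext (by simp [hk1, hp1])
        subst hp
        exact Or.inl (Or.inr ⟨u, ⟨hu, by rwa [Equiv.swap_apply_right] at hv⟩, rfl⟩)
    · -- reverse inclusion
      intro he
      have main : ∀ k : Fin n, k ≠ a → Equiv.swap k a ∈ cwGen n → e ∈ F k →
          e ∈ {e ∈ (CW n).edgeSet | ∃ u v : Equiv.Perm (Fin n),
            e = s(u, v) ∧ u a = i ∧ v a = j} := by
        rintro k hka hgen ⟨u, ⟨hu1, hu2⟩, rfl⟩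
        refine ⟨?_, u, u * Equiv.swap k a, rfl, hu1, ?_⟩
        · rw [SimpleGraph.mem_edgeSet]
          refine ⟨?_, ?_⟩
          · intro h
            have h2 : u * Equiv.swap k a = u * 1 := by rw [mul_one, ← h]
            exact hka (Equiv.swap_eq_one_iff.mp (mul_left_cancel h2))
          · have : u⁻¹ * (u * Equiv.swap k a) = Equiv.swap k a := by group
            rwa [this]
        · rw [Equiv.Perm.mul_apply, Equiv.swap_apply_right]; exact hu2
      rcases he with (he | he) | he
      · exact main k0 hk0a ⟨k0, a, rfl, Or.inl ⟨by simp [hk0], fun h => hk0a h.symm⟩⟩ he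
      · exact main k1 hk1a ⟨k1, a, rfl, Or.inr (Or.inr ⟨by simp [hk1], ha⟩)⟩ he
      · exact main k2 hk2a ⟨k2, a, rfl, Or.inr (Or.inl ⟨by simp [hk2, ha]; omega, by simp [hk2]; omega⟩)⟩ he
  rw [key]
  -- disjointness
  have hdisj : ∀ k k' : Fin n, k ≠ k' → Disjoint (F k) (F k') := by
    intro k k' hkk'
    rw [Set.disjoint_left]
    rintro e ⟨u, ⟨hu1, hu2⟩, rfl⟩ ⟨v, ⟨hv1, hv2⟩, heq⟩
    rw [Sym2.eq_iff] at heq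
    rcases heq with ⟨h1, h2⟩ | ⟨h1, h2⟩
    · subst h1
      have hs : Equiv.swap k' a = Equiv.swap k a := mul_left_cancel h2
      have := congrArg (fun s : Equiv.Perm (Fin n) => s a) hs
      simp only [Equiv.swap_apply_right] at this
      exact hkk' this.symm
    · rw [← h2, Equiv.Perm.mul_apply, Equiv.swap_apply_right, hv2] at hu1
      exact hij hu1.symm
  have hdisj2 : ∀ k k' : Fin n, k ≠ k' → Disjoint (F k) (F k') := hdisj
  -- injectivity on each piece
  have hncard : ∀ k : Fin n, k ≠ a → (F k).ncard = Nat.factorial (n - 2) := by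
    intro k hka
    rw [hF]
    rw [Set.ncard_image_of_injOn, cardPermTwo a k i j (fun h => hka h.symm) hij]
    rintro u ⟨hu1, hu2⟩ v ⟨hv1, hv2⟩ heq
    simp only [Sym2.eq_iff] at heq
    rcases heq with ⟨h1, _⟩ | ⟨h1, h2⟩
    · exact h1
    · exfalso
      rw [h1, Equiv.Perm.mul_apply, Equiv.swap_apply_right, hv2] at hu1
      exact hij hu1.symm
  have hk01 : k0 ≠ k1 := fun h => by have := congrArg Fin.val h; simp [hk0, hk1] at this
  have hk02 : k0 ≠ k2 := fun h => by have := congrArg Fin.val h; simp [hk0, hk2] at this; omega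
  have hk12 : k1 ≠ k2 := fun h => by have := congrArg Fin.val h; simp [hk1, hk2] at this; omega
  rw [Set.ncard_union_eq (Set.disjoint_union_left.mpr ⟨hdisj _ _ hk02, hdisj _ _ hk12⟩)
      ((Set.toFinite _).union (Set.toFinite _)) (Set.toFinite _),
    Set.ncard_union_eq (hdisj _ _ hk01) (Set.toFinite _) (Set.toFinite _),
    hncard k0 hk0a, hncard k1 hk1a, hncard k2 hk2a]
  ring

/-- For n ≥ 4 and distinct indices i, j, the number of edges of CW_n between the copies
CW_n^i and CW_n^j equals 3·(n−2)!.
(The copy CW_n^i consists of those σ with σ(n) = i; indices are zero-indexed in `Fin n`.) -/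
theorem stmt12 (n : ℕ) (hn : 4 ≤ n) (i j : Fin n) (hij : i ≠ j) :
    {e ∈ (CW n).edgeSet | ∃ u v : Equiv.Perm (Fin n),
        e = s(u, v) ∧ u ⟨n - 1, by omega⟩ = i ∧ v ⟨n - 1, by omega⟩ = j}.ncard
      = 3 * Nat.factorial (n - 2) :=
  mainAux hn i j hij ⟨n - 1, by omega⟩ rfl
end
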